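/- Let $N\le T$, let $(\alpha_i)_{i=1}^N$, $(\gamma_t)_{t=1}^T$ be mutually independent i.i.d. random variables, and let $w$ be an integrable kernel degenerate in both arguments. Define the filtration $\mathcal{F}_0=\{\emptyset,\Omega\}$, $\mathcal{F}_{s}=\sigma(\alpha_1,\dots,\alpha_{s\wedge N},\gamma_1,\dots,\gamma_s)$ for $1\le s<T$, and set $U_s=\sum_{1\le t<s}w(\alpha_s,\gamma_t)+w(\alpha_s,\gamma_s)+\sum_{1\le i<s}w(\alpha_i,\gamma_s)$ for $s\le N$ and $U_s=\sum_{1\le i\le N}w(\alpha_i,\gamma_s)$ for $N<s\le T$. Then $(U_s,\mathcal{F}_s)_{s=1}^T$ is a martingale difference sequence: each $U_s$ is $\mathcal{F}_s$-measurable and $E[U_s\mid\mathcal{F}_{s-1}]=0$ a.s., and $\sum_{s=1}^T U_s=\sum_{i=1}^N\sum_{t=1}^T w(\alpha_i,\gamma_t)$. -/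

import Mathlib

open MeasureTheory ProbabilityTheory

namespace DiagMD

variable {Ω : Type*} [MeasurableSpace Ω] {μ : Measure Ω} [IsProbabilityMeasure μ]

lemma fub {β : Type*} [MeasurableSpace β]
    {X : Ω → ℝ} {W : Ω → β} (hX : Measurable X) (hW : Measurable W)
    (hi : IndepFun X W μ) {F : ℝ → β → ℝ} (hF : Measurable (Function.uncurry F))
    (hFint : Integrable (fun ω => F (X ω) (W ω)) μ) :
    ∫ ω, F (X ω) (W ω) ∂μ = ∫ z, ∫ x, F x z ∂(μ.map X) ∂(μ.map W) := by
  haveI : IsProbabilityMeasure (μ.map X) := Measure.isProbabilityMeasure_map hX.aemeasurable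
  haveI : IsProbabilityMeasure (μ.map W) := Measure.isProbabilityMeasure_map hW.aemeasurable
  have hP : Measurable fun ω => (W ω, X ω) := hW.prodMk hX
  have hmap : μ.map (fun ω => (W ω, X ω)) = (μ.map W).prod (μ.map X) :=
    (indepFun_iff_map_prod_eq_prod_map_map hW.aemeasurable hX.aemeasurable).mp hi.symm
  have hG : Measurable fun p : β × ℝ => F p.2 p.1 :=
    hF.comp (measurable_snd.prodMk measurable_fst)
  have hGint : Integrable (fun p : β × ℝ => F p.2 p.1) ((μ.map W).prod (μ.map X)) := by
    rw [← hmap]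
    exact (integrable_map_measure hG.aestronglyMeasurable hP.aemeasurable).mpr hFint
  calc ∫ ω, F (X ω) (W ω) ∂μ
      = ∫ p : β × ℝ, F p.2 p.1 ∂(μ.map fun ω => (W ω, X ω)) :=
        (integral_map hP.aemeasurable hG.aestronglyMeasurable).symm
    _ = ∫ p : β × ℝ, F p.2 p.1 ∂((μ.map W).prod (μ.map X)) := by rw [hmap]
    _ = ∫ z, ∫ x, F x z ∂(μ.map X) ∂(μ.map W) := integral_prod _ hGint

lemma fubZero {β : Type*} [MeasurableSpace β]
    {X : Ω → ℝ} {W : Ω → β} (hX : Measurable X) (hW : Measurable W)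
    (hi : IndepFun X W μ) {F : ℝ → β → ℝ} (hF : Measurable (Function.uncurry F))
    (hFint : Integrable (fun ω => F (X ω) (W ω)) μ)
    (hnull : ∀ᵐ z ∂(μ.map W), ∫ x, F x z ∂(μ.map X) = 0) :
    ∫ ω, F (X ω) (W ω) ∂μ = 0 :=
  (fub hX hW hi hF hFint).trans ((integral_congr_ae hnull).trans (integral_zero _ _))

/-- measurability of `y ↦ ∫ x, w x y ∂ν`. -/
lemma measurable_inner {w : ℝ → ℝ → ℝ} (hw : Measurable (Function.uncurry w))
    (ν : Measure ℝ) [SFinite ν] : Measurable fun y => ∫ x, w x y ∂ν := by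
  have hG : StronglyMeasurable fun p : ℝ × ℝ => w p.2 p.1 :=
    (hw.comp (measurable_snd.prodMk measurable_fst)).stronglyMeasurable
  exact hG.integral_prod_right'.measurable

lemma setIntegral_zero_of_indep
    {X V : Ω → ℝ} (hX : Measurable X) (hV : Measurable V)
    {w : ℝ → ℝ → ℝ} (hw : Measurable (Function.uncurry w))
    {A : Set Ω} (hA : MeasurableSet A)
    (hi : IndepFun X (fun ω => (A.indicator (fun _ => (1:ℝ)) ω, V ω)) μ)
    (hint : Integrable (fun ω => w (X ω) (V ω)) μ)
    (hnull : ∀ᵐ y ∂(μ.map V), ∫ x, w x y ∂(μ.map X) = 0) :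
    ∫ ω in A, w (X ω) (V ω) ∂μ = 0 := by
  haveI : IsProbabilityMeasure (μ.map X) := Measure.isProbabilityMeasure_map hX.aemeasurable
  set W : Ω → ℝ × ℝ := fun ω => (A.indicator (fun _ => (1:ℝ)) ω, V ω) with hWdef
  have hWm : Measurable W := (measurable_const.indicator hA).prodMk hV
  have hFm : Measurable (Function.uncurry fun (x : ℝ) (z : ℝ × ℝ) => z.1 * w x z.2) := by
    exact (measurable_fst.comp measurable_snd).mul
      (hw.comp (measurable_fst.prodMk (measurable_snd.comp measurable_snd)))
  have hFint : Integrable (fun ω => (W ω).1 * w (X ω) (V ω)) μ := by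
    refine hint.bdd_mul ((measurable_const.indicator hA).aestronglyMeasurable) (c := 1) (Filter.Eventually.of_forall fun ω => ?_)
    by_cases h : ω ∈ A <;> simp [W, h]
  have h0 : ∫ ω in A, w (X ω) (V ω) ∂μ = ∫ ω, (W ω).1 * w (X ω) (V ω) ∂μ := by
    rw [← integral_indicator hA]
    congr 1; funext ω
    by_cases h : ω ∈ A <;> simp [W, h]
  rw [h0]
  refine fubZero hX hWm hi hFm hFint ?_
  have hsnd : (μ.map W).map Prod.snd = μ.map V := by
    rw [Measure.map_map measurable_snd hWm]; rfl
  have hPm : MeasurableSet {y : ℝ | ∫ x, w x y ∂(μ.map X) = 0} :=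
    (measurable_inner hw (μ.map X)) (measurableSet_singleton 0)
  have h2 : ∀ᵐ z ∂(μ.map W), ∫ x, w x z.2 ∂(μ.map X) = 0 := by
    rw [← hsnd] at hnull
    exact (ae_map_iff measurable_snd.aemeasurable hPm).mp hnull
  filter_upwards [h2] with z hz
  rw [integral_const_mul, hz, mul_zero]

lemma deg_null {X V : Ω → ℝ} (hX : Measurable X) (hV : Measurable V)
    {w : ℝ → ℝ → ℝ} (hw : Measurable (Function.uncurry w))
    (hi : IndepFun X V μ)
    (hint : Integrable (fun ω => w (X ω) (V ω)) μ)
    (hdeg : μ[(fun ω => w (X ω) (V ω)) | MeasurableSpace.comap V inferInstance] =ᵐ[μ] 0) :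
    ∀ᵐ y ∂(μ.map V), ∫ x, w x y ∂(μ.map X) = 0 := by
  haveI : IsProbabilityMeasure (μ.map X) := Measure.isProbabilityMeasure_map hX.aemeasurable
  haveI : IsProbabilityMeasure (μ.map V) := Measure.isProbabilityMeasure_map hV.aemeasurable
  have hmapVX : μ.map (fun ω => (V ω, X ω)) = (μ.map V).prod (μ.map X) :=
    (indepFun_iff_map_prod_eq_prod_map_map hV.aemeasurable hX.aemeasurable).mp hi.symm
  have hGm : Measurable fun p : ℝ × ℝ => w p.2 p.1 :=
    hw.comp (measurable_snd.prodMk measurable_fst)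
  have hGint : Integrable (fun p : ℝ × ℝ => w p.2 p.1) ((μ.map V).prod (μ.map X)) := by
    rw [← hmapVX]
    exact (integrable_map_measure hGm.aestronglyMeasurable
      ((hV.prodMk hX).aemeasurable)).mpr hint
  have hh : Integrable (fun y => ∫ x, w x y ∂(μ.map X)) (μ.map V) := hGint.integral_prod_left
  have key : ∀ B : Set ℝ, MeasurableSet B →
      ∫ y in B, (∫ x, w x y ∂(μ.map X)) ∂(μ.map V) = 0 := by
    intro B hB
    have hFm : Measurable (Function.uncurry fun (x y : ℝ) =>
        B.indicator (fun _ => (1:ℝ)) y * w x y) :=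
      ((measurable_const.indicator hB).comp measurable_snd).mul hw
    have hFint : Integrable (fun ω => B.indicator (fun _ => (1:ℝ)) (V ω) * w (X ω) (V ω)) μ := by
      refine hint.bdd_mul ((measurable_const.indicator hB).comp hV).aestronglyMeasurable
        (c := 1) (Filter.Eventually.of_forall fun ω => ?_)
      by_cases h : V ω ∈ B <;> simp [h]
    have hfub := fub hX hV hi hFm hFint
    have hLHS : ∫ ω, B.indicator (fun _ => (1:ℝ)) (V ω) * w (X ω) (V ω) ∂μ = 0 := by
      have hind : (fun ω => B.indicator (fun _ => (1:ℝ)) (V ω) * w (X ω) (V ω))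
          = (V ⁻¹' B).indicator (fun ω => w (X ω) (V ω)) := by
        funext ω
        by_cases h : V ω ∈ B <;> simp [h]
      rw [hind, integral_indicator (hV hB)]
      calc ∫ ω in V ⁻¹' B, w (X ω) (V ω) ∂μ
          = ∫ ω in V ⁻¹' B,
              (μ[(fun ω => w (X ω) (V ω)) | MeasurableSpace.comap V inferInstance]) ω ∂μ :=
            (setIntegral_condExp hV.comap_le hint ⟨B, hB, rfl⟩).symm
        _ = ∫ ω in V ⁻¹' B, (0 : Ω → ℝ) ω ∂μ :=
            setIntegral_congr_ae (hV hB) (hdeg.mono fun ω hω _ => hω)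
        _ = 0 := by simp
    rw [hLHS] at hfub
    have hRHS : ∫ y, ∫ x, B.indicator (fun _ => (1:ℝ)) y * w x y ∂(μ.map X) ∂(μ.map V)
        = ∫ y in B, (∫ x, w x y ∂(μ.map X)) ∂(μ.map V) := by
      rw [← integral_indicator hB]
      refine integral_congr_ae (Filter.Eventually.of_forall fun y => ?_)
      by_cases h : y ∈ B <;> simp [h, integral_const_mul]
    rw [hRHS] at hfub
    exact hfub.symm
  have := hh.ae_eq_zero_of_forall_setIntegral_eq_zero fun B hB _ => key B hB
  filter_upwards [this] with y hy
  simpa using hy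

end DiagMD

/-- The diagonal martingale-difference construction for degenerate two-sample
U-statistics: `(U_s, 𝓕_s)` is a martingale difference sequence and
`∑_{s=1}^T U_s = ∑_{i=1}^N ∑_{t=1}^T w(αᵢ,γₜ)`. -/
theorem diagonal_martingale_difference_construction
    {Ω : Type*} [MeasurableSpace Ω] {μ : Measure Ω} [IsProbabilityMeasure μ]
    (α γ : ℕ → Ω → ℝ) (w : ℝ → ℝ → ℝ)
    (hmeas : Measurable (Function.uncurry w))
    (hmα : ∀ i, Measurable (α i)) (hmγ : ∀ t, Measurable (γ t))
    (hindep : iIndepFun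
      (Sum.elim α γ) μ)
    (hidα : ∀ i, Measure.map (α i) μ = Measure.map (α 1) μ)
    (hidγ : ∀ t, Measure.map (γ t) μ = Measure.map (γ 1) μ)
    (hint : ∀ i t, Integrable (fun ω => w (α i ω) (γ t ω)) μ)
    (hdegα : μ[(fun ω => w (α 1 ω) (γ 1 ω)) |
      MeasurableSpace.comap (α 1) inferInstance] =ᵐ[μ] 0)
    (hdegγ : μ[(fun ω => w (α 1 ω) (γ 1 ω)) |
      MeasurableSpace.comap (γ 1) inferInstance] =ᵐ[μ] 0)
    (N T : ℕ) (hN : 1 ≤ N) (hNT : N ≤ T) :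
    (let F : ℕ → MeasurableSpace Ω := fun s =>
       (⨆ i ∈ Finset.Icc 1 (min s N), MeasurableSpace.comap (α i) inferInstance) ⊔
         ⨆ t ∈ Finset.Icc 1 s, MeasurableSpace.comap (γ t) inferInstance
     let U : ℕ → Ω → ℝ := fun s ω =>
       if s ≤ N then
         (∑ t ∈ Finset.Ico 1 s, w (α s ω) (γ t ω)) + w (α s ω) (γ s ω) +
           ∑ i ∈ Finset.Ico 1 s, w (α i ω) (γ s ω)
       else ∑ i ∈ Finset.Icc 1 N, w (α i ω) (γ s ω)
     (∀ s ∈ Finset.Icc 1 T, Measurable[F s] (U s)) ∧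
     (∀ s ∈ Finset.Icc 1 T, μ[U s | F (s - 1)] =ᵐ[μ] 0) ∧
     (fun ω => ∑ s ∈ Finset.Icc 1 T, U s ω) =
       fun ω => ∑ i ∈ Finset.Icc 1 N, ∑ t ∈ Finset.Icc 1 T, w (α i ω) (γ t ω)) := by
  intro F U
  -- basic facts
  have hFle : ∀ s : ℕ, F s ≤ (inferInstance : MeasurableSpace Ω) := fun s =>
    sup_le (iSup₂_le fun i _ => (hmα i).comap_le) (iSup₂_le fun t _ => (hmγ t).comap_le)
  have hαFs : ∀ s i : ℕ, i ∈ Finset.Icc 1 (min s N) → Measurable[F s] (α i) := by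
    intro s i hi
    refine Measurable.mono (measurable_iff_comap_le.mpr le_rfl) ?_ le_rfl
    calc MeasurableSpace.comap (α i) inferInstance
        ≤ ⨆ j ∈ Finset.Icc 1 (min s N), MeasurableSpace.comap (α j) inferInstance :=
          le_biSup (fun j => MeasurableSpace.comap (α j) inferInstance) hi
      _ ≤ F s := le_sup_left
  have hγFs : ∀ s t : ℕ, t ∈ Finset.Icc 1 s → Measurable[F s] (γ t) := by
    intro s t ht
    refine Measurable.mono (measurable_iff_comap_le.mpr le_rfl) ?_ le_rfl
    calc MeasurableSpace.comap (γ t) inferInstance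
        ≤ ⨆ j ∈ Finset.Icc 1 s, MeasurableSpace.comap (γ j) inferInstance :=
          le_biSup (fun j => MeasurableSpace.comap (γ j) inferInstance) ht
      _ ≤ F s := le_sup_right
  -- degeneracy in integral form
  have hαγind : IndepFun (α 1) (γ 1) μ :=
    hindep.indepFun (i := Sum.inl 1) (j := Sum.inr 1) (by simp)
  have D1 : ∀ᵐ y ∂(μ.map (γ 1)), ∫ x, w x y ∂(μ.map (α 1)) = 0 :=
    DiagMD.deg_null (hmα 1) (hmγ 1) hmeas hαγind (hint 1 1) hdegγ
  have hw' : Measurable (Function.uncurry fun (x y : ℝ) => w y x) :=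
    hmeas.comp (measurable_snd.prodMk measurable_fst)
  have D2 : ∀ᵐ y ∂(μ.map (α 1)), ∫ x, (fun (x y : ℝ) => w y x) x y ∂(μ.map (γ 1)) = 0 :=
    DiagMD.deg_null (hmγ 1) (hmα 1) hw' hαγind.symm (hint 1 1) hdegα
  -- independence of σ-algebras
  have hiI : iIndep (fun n : ℕ ⊕ ℕ =>
      MeasurableSpace.comap (Sum.elim α γ n) inferInstance) μ :=
    (iIndepFun_iff_iIndep _ _ _).mp hindep
  have hle : ∀ n : ℕ ⊕ ℕ, MeasurableSpace.comap (Sum.elim α γ n) inferInstance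
      ≤ (inferInstance : MeasurableSpace Ω) := by
    rintro (i | t)
    · exact (hmα i).comap_le
    · exact (hmγ t).comap_le
  have hIα : ∀ s t : ℕ, 1 ≤ s → t ≤ s →
      Indep (MeasurableSpace.comap (α s) inferInstance)
        (F (s-1) ⊔ MeasurableSpace.comap (γ t) inferInstance) μ := by
    intro s t hs ht
    have hbig := indep_iSup_of_disjoint hle hiI
      (disjoint_compl_right : Disjoint ({Sum.inl s} : Set (ℕ ⊕ ℕ)) {Sum.inl s}ᶜ)
    refine indep_of_indep_of_le_right (indep_of_indep_of_le_left hbig ?_) ?_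
    · simp
    · refine sup_le (sup_le ?_ ?_) ?_
      · refine iSup₂_le fun i hi => ?_
        have hmem : (Sum.inl i : ℕ ⊕ ℕ) ∈ ({Sum.inl s} : Set (ℕ ⊕ ℕ))ᶜ := by
          have h2 := Finset.mem_Icc.mp hi
          simp only [Set.mem_compl_iff, Set.mem_singleton_iff, Sum.inl.injEq]
          omega
        exact le_biSup (fun n : ℕ ⊕ ℕ => MeasurableSpace.comap (Sum.elim α γ n) inferInstance)
          hmem
      · refine iSup₂_le fun u hu => ?_
        have hmem : (Sum.inr u : ℕ ⊕ ℕ) ∈ ({Sum.inl s} : Set (ℕ ⊕ ℕ))ᶜ := by simp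
        exact le_biSup (fun n : ℕ ⊕ ℕ => MeasurableSpace.comap (Sum.elim α γ n) inferInstance)
          hmem
      · have hmem : (Sum.inr t : ℕ ⊕ ℕ) ∈ ({Sum.inl s} : Set (ℕ ⊕ ℕ))ᶜ := by simp
        exact le_biSup (fun n : ℕ ⊕ ℕ => MeasurableSpace.comap (Sum.elim α γ n) inferInstance)
          hmem
  have hIγ : ∀ s : ℕ, 1 ≤ s →
      Indep (MeasurableSpace.comap (γ s) inferInstance) (F (s-1)) μ := by
    intro s hs
    have hbig := indep_iSup_of_disjoint hle hiI
      (disjoint_compl_right : Disjoint ({Sum.inr s} : Set (ℕ ⊕ ℕ)) {Sum.inr s}ᶜ)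
    refine indep_of_indep_of_le_right (indep_of_indep_of_le_left hbig ?_) ?_
    · simp
    · refine sup_le ?_ ?_
      · refine iSup₂_le fun i hi => ?_
        have hmem : (Sum.inl i : ℕ ⊕ ℕ) ∈ ({Sum.inr s} : Set (ℕ ⊕ ℕ))ᶜ := by simp
        exact le_biSup (fun n : ℕ ⊕ ℕ => MeasurableSpace.comap (Sum.elim α γ n) inferInstance)
          hmem
      · refine iSup₂_le fun u hu => ?_
        have hmem : (Sum.inr u : ℕ ⊕ ℕ) ∈ ({Sum.inr s} : Set (ℕ ⊕ ℕ))ᶜ := by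
          have h2 := Finset.mem_Icc.mp hu
          simp only [Set.mem_compl_iff, Set.mem_singleton_iff, Sum.inr.injEq]
          omega
        exact le_biSup (fun n : ℕ ⊕ ℕ => MeasurableSpace.comap (Sum.elim α γ n) inferInstance)
          hmem
  -- the vanishing set integrals
  have termα : ∀ s t : ℕ, 1 ≤ s → t ≤ s → ∀ A : Set Ω, MeasurableSet[F (s-1)] A →
      ∫ ω in A, w (α s ω) (γ t ω) ∂μ = 0 := by
    intro s t hs ht A hA
    have hAm : MeasurableSet A := hFle (s-1) A hA
    refine DiagMD.setIntegral_zero_of_indep (hmα s) (hmγ t) hmeas hAm ?_ (hint s t) ?_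
    · -- independence
      have h2 := hIα s t hs ht
      have hWm : Measurable[F (s-1) ⊔ MeasurableSpace.comap (γ t) inferInstance]
          fun ω => (A.indicator (fun _ => (1:ℝ)) ω, γ t ω) := by
        refine Measurable.prodMk ?_ ?_
        · exact ((measurable_const.indicator hA).mono le_sup_left le_rfl)
        · exact Measurable.mono (measurable_iff_comap_le.mpr le_rfl) le_sup_right le_rfl
      rw [IndepFun_iff_Indep]
      exact indep_of_indep_of_le_right h2 hWm.comap_le
    · rw [hidγ t, hidα s]; exact D1
  have termγ : ∀ s i : ℕ, 1 ≤ s → 1 ≤ i → i ≤ min (s-1) N → ∀ A : Set Ω,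
      MeasurableSet[F (s-1)] A → ∫ ω in A, w (α i ω) (γ s ω) ∂μ = 0 := by
    intro s i hs hi1 hiN A hA
    have hAm : MeasurableSet A := hFle (s-1) A hA
    refine DiagMD.setIntegral_zero_of_indep (w := fun (x y : ℝ) => w y x)
      (hmγ s) (hmα i) hw' hAm ?_ (hint i s) ?_
    · have h2 := hIγ s hs
      have hWm : Measurable[F (s-1)]
          fun ω => (A.indicator (fun _ => (1:ℝ)) ω, α i ω) := by
        refine Measurable.prodMk (measurable_const.indicator hA) ?_
        exact hαFs (s-1) i (Finset.mem_Icc.mpr ⟨hi1, hiN⟩)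
      rw [IndepFun_iff_Indep]
      exact indep_of_indep_of_le_right h2 hWm.comap_le
    · rw [hidα i, hidγ s]; exact D2
  -- part 1: measurability
  have h1 : ∀ s ∈ Finset.Icc 1 T, Measurable[F s] (U s) := by
    intro s hsIcc
    obtain ⟨hs1, hsT⟩ := Finset.mem_Icc.mp hsIcc
    have hU : U s = fun ω =>
        if s ≤ N then
          (∑ t ∈ Finset.Ico 1 s, w (α s ω) (γ t ω)) + w (α s ω) (γ s ω) +
            ∑ i ∈ Finset.Ico 1 s, w (α i ω) (γ s ω)
        else ∑ i ∈ Finset.Icc 1 N, w (α i ω) (γ s ω) := rfl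
    rw [hU]
    by_cases hsN : s ≤ N
    · simp only [if_pos hsN]
      have hterm : ∀ i t : ℕ, i ∈ Finset.Icc 1 (min s N) → t ∈ Finset.Icc 1 s →
          Measurable[F s] fun ω => w (α i ω) (γ t ω) := fun i t hi ht =>
        hmeas.comp ((hαFs s i hi).prodMk (hγFs s t ht))
      refine Measurable.add (Measurable.add ?_ ?_) ?_
      · refine Finset.measurable_sum _ fun t ht => hterm s t ?_ ?_
        · exact Finset.mem_Icc.mpr ⟨hs1, by omega⟩
        · have := Finset.mem_Ico.mp ht; exact Finset.mem_Icc.mpr ⟨this.1, by omega⟩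
      · exact hterm s s (Finset.mem_Icc.mpr ⟨hs1, by omega⟩) (Finset.mem_Icc.mpr ⟨hs1, le_rfl⟩)
      · refine Finset.measurable_sum _ fun i hi => ?_
        have := Finset.mem_Ico.mp hi
        exact hterm i s (Finset.mem_Icc.mpr ⟨this.1, by omega⟩)
          (Finset.mem_Icc.mpr ⟨hs1, le_rfl⟩)
    · simp only [if_neg hsN]
      refine Finset.measurable_sum _ fun i hi => ?_
      have := Finset.mem_Icc.mp hi
      exact hmeas.comp ((hαFs s i (Finset.mem_Icc.mpr ⟨this.1, by omega⟩)).prodMk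
        (hγFs s s (Finset.mem_Icc.mpr ⟨hs1, le_rfl⟩)))
  -- part 2: martingale differences
  have h2 : ∀ s ∈ Finset.Icc 1 T, μ[U s | F (s - 1)] =ᵐ[μ] 0 := by
    intro s hsIcc
    obtain ⟨hs1, hsT⟩ := Finset.mem_Icc.mp hsIcc
    have hm : F (s-1) ≤ (inferInstance : MeasurableSpace Ω) := hFle (s-1)
    have hU : U s = fun ω =>
        if s ≤ N then
          (∑ t ∈ Finset.Ico 1 s, w (α s ω) (γ t ω)) + w (α s ω) (γ s ω) +
            ∑ i ∈ Finset.Ico 1 s, w (α i ω) (γ s ω)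
        else ∑ i ∈ Finset.Icc 1 N, w (α i ω) (γ s ω) := rfl
    have hUint : Integrable (U s) μ := by
      rw [hU]
      by_cases hsN : s ≤ N
      · simp only [if_pos hsN]
        exact ((integrable_finset_sum _ fun t _ => hint s t).add (hint s s)).add
          (integrable_finset_sum _ fun i _ => hint i s)
      · simp only [if_neg hsN]
        exact integrable_finset_sum _ fun i _ => hint i s
    have hzero : ∀ A : Set Ω, MeasurableSet[F (s-1)] A → ∫ ω in A, U s ω ∂μ = 0 := by
      intro A hA
      rw [hU]
      by_cases hsN : s ≤ N
      · simp only [if_pos hsN]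
        have i1 : Integrable (fun ω => ∑ t ∈ Finset.Ico 1 s, w (α s ω) (γ t ω)) μ :=
          integrable_finset_sum _ fun t _ => hint s t
        have i3 : Integrable (fun ω => ∑ i ∈ Finset.Ico 1 s, w (α i ω) (γ s ω)) μ :=
          integrable_finset_sum _ fun i _ => hint i s
        have i12 : Integrable (fun ω => (∑ t ∈ Finset.Ico 1 s, w (α s ω) (γ t ω))
            + w (α s ω) (γ s ω)) μ := i1.add (hint s s)
        have k1 : ∫ ω in A, ((∑ t ∈ Finset.Ico 1 s, w (α s ω) (γ t ω)) + w (α s ω) (γ s ω)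
              + ∑ i ∈ Finset.Ico 1 s, w (α i ω) (γ s ω)) ∂μ
            = (∫ ω in A, ((∑ t ∈ Finset.Ico 1 s, w (α s ω) (γ t ω)) + w (α s ω) (γ s ω)) ∂μ)
              + ∫ ω in A, (∑ i ∈ Finset.Ico 1 s, w (α i ω) (γ s ω)) ∂μ :=
          integral_add i12.integrableOn i3.integrableOn
        have k2 : ∫ ω in A, ((∑ t ∈ Finset.Ico 1 s, w (α s ω) (γ t ω)) + w (α s ω) (γ s ω)) ∂μ
            = (∫ ω in A, (∑ t ∈ Finset.Ico 1 s, w (α s ω) (γ t ω)) ∂μ)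
              + ∫ ω in A, w (α s ω) (γ s ω) ∂μ :=
          integral_add i1.integrableOn (hint s s).integrableOn
        rw [k1, k2, integral_finset_sum _ (fun t _ => (hint s t).integrableOn),
          integral_finset_sum _ (fun i _ => (hint i s).integrableOn)]
        have e1 : ∀ t ∈ Finset.Ico 1 s, ∫ ω in A, w (α s ω) (γ t ω) ∂μ = 0 := by
          intro t ht
          have := Finset.mem_Ico.mp ht
          exact termα s t hs1 (by omega) A hA
        have e2 : ∫ ω in A, w (α s ω) (γ s ω) ∂μ = 0 := termα s s hs1 le_rfl A hA
        have e3 : ∀ i ∈ Finset.Ico 1 s, ∫ ω in A, w (α i ω) (γ s ω) ∂μ = 0 := by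
          intro i hi
          have := Finset.mem_Ico.mp hi
          exact termγ s i hs1 this.1 (by omega) A hA
        rw [Finset.sum_congr rfl e1, Finset.sum_congr rfl e3, e2]
        simp
      · simp only [if_neg hsN]
        rw [integral_finset_sum _ (fun i _ => (hint i s).integrableOn)]
        have e3 : ∀ i ∈ Finset.Icc 1 N, ∫ ω in A, w (α i ω) (γ s ω) ∂μ = 0 := by
          intro i hi
          have := Finset.mem_Icc.mp hi
          exact termγ s i hs1 this.1 (by omega) A hA
        rw [Finset.sum_congr rfl e3]
        simp
    refine (ae_eq_condExp_of_forall_setIntegral_eq hm hUint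
      (fun A hA hμA => (integrable_zero _ _ _).integrableOn)
      (fun A hA hμA => ?_) ?_).symm
    · rw [hzero A hA]; simp
    · exact StronglyMeasurable.aestronglyMeasurable
        (stronglyMeasurable_zero : StronglyMeasurable[F (s-1)] (0 : Ω → ℝ))
  -- part 3: telescoping
  have h3 : (fun ω => ∑ s ∈ Finset.Icc 1 T, U s ω) =
      fun ω => ∑ i ∈ Finset.Icc 1 N, ∑ t ∈ Finset.Icc 1 T, w (α i ω) (γ t ω) := by
    funext ω
    have square : ∀ n, n ≤ N → ∑ s ∈ Finset.Icc 1 n, U s ω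
        = ∑ i ∈ Finset.Icc 1 n, ∑ t ∈ Finset.Icc 1 n, w (α i ω) (γ t ω) := by
      intro n
      induction n with
      | zero => intro _; simp
      | succ n ih =>
        intro hn
        have hn' : n ≤ N := Nat.le_of_succ_le hn
        rw [Finset.sum_Icc_succ_top (by omega : 1 ≤ n+1), ih hn']
        have hUn : U (n+1) ω = (∑ t ∈ Finset.Icc 1 n, w (α (n+1) ω) (γ t ω))
            + w (α (n+1) ω) (γ (n+1) ω) + ∑ i ∈ Finset.Icc 1 n, w (α i ω) (γ (n+1) ω) := by
          show (if n+1 ≤ N then (∑ t ∈ Finset.Ico 1 (n+1), w (α (n+1) ω) (γ t ω))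
              + w (α (n+1) ω) (γ (n+1) ω) + ∑ i ∈ Finset.Ico 1 (n+1), w (α i ω) (γ (n+1) ω)
            else ∑ i ∈ Finset.Icc 1 N, w (α i ω) (γ (n+1) ω)) = _
          rw [if_pos hn, Finset.Ico_add_one_right_eq_Icc]
        rw [hUn, Finset.sum_Icc_succ_top (by omega : 1 ≤ n+1)]
        have e1 : ∀ i, ∑ t ∈ Finset.Icc 1 (n+1), w (α i ω) (γ t ω)
            = ∑ t ∈ Finset.Icc 1 n, w (α i ω) (γ t ω) + w (α i ω) (γ (n+1) ω) :=
          fun i => Finset.sum_Icc_succ_top (by omega) _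
        simp only [e1]
        rw [Finset.sum_add_distrib]
        ring
    have column : ∀ T', N ≤ T' → ∑ s ∈ Finset.Icc 1 T', U s ω
        = ∑ i ∈ Finset.Icc 1 N, ∑ t ∈ Finset.Icc 1 T', w (α i ω) (γ t ω) := by
      intro T' hT'
      induction T', hT' using Nat.le_induction with
      | base => exact square N le_rfl
      | succ T' hT' ih =>
        rw [Finset.sum_Icc_succ_top (by omega : 1 ≤ T'+1), ih]
        have hUT : U (T'+1) ω = ∑ i ∈ Finset.Icc 1 N, w (α i ω) (γ (T'+1) ω) := by
          show (if T'+1 ≤ N then (∑ t ∈ Finset.Ico 1 (T'+1), w (α (T'+1) ω) (γ t ω))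
              + w (α (T'+1) ω) (γ (T'+1) ω) + ∑ i ∈ Finset.Ico 1 (T'+1), w (α i ω) (γ (T'+1) ω)
            else ∑ i ∈ Finset.Icc 1 N, w (α i ω) (γ (T'+1) ω)) = _
          rw [if_neg (by omega)]
        rw [hUT, ← Finset.sum_add_distrib]
        refine Finset.sum_congr rfl fun i hi => (Finset.sum_Icc_succ_top (by omega) _).symm
    exact column T hNT
  exact ⟨h1, h2, h3⟩
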